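/- Let γ, ν, h > 0 be real numbers, define F : ℝ → ℝ by F(x) = x − hγ·x·|x|^ν, and let p = (2/(hγ))^(1/ν). Then the composition F ∘ F is differentiable at p with derivative (F ∘ F)′(p) = (2ν + 1)², and (2ν + 1)² > 1; in particular the two-cycle {p, −p} of F is unstable. -/

import Mathlib

lemma aux_hasDerivAt (γ ν h : ℝ) (hν : 0 < ν)
    (F : ℝ → ℝ) (hF : ∀ x, F x = x - h * γ * x * |x| ^ ν)
    (x : ℝ) (hx : x ≠ 0) :
    HasDerivAt F (1 - h * γ * (ν + 1) * |x| ^ ν) x := by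
  rcases hx.lt_or_gt with hneg | hpos
  · -- x < 0, locally |y| = -y
    have hxne : -x ≠ 0 := neg_ne_zero.mpr hx
    have hrp : HasDerivAt (fun y : ℝ => (-y) ^ ν) ((-1) * (ν * (-x) ^ (ν - 1))) x := by
      have h1 : HasDerivAt (fun y : ℝ => -y) (-1) x := (hasDerivAt_id x).neg
      have h2 : HasDerivAt (fun z : ℝ => z ^ ν) (ν * (-x) ^ (ν - 1)) (-x) :=
        Real.hasDerivAt_rpow_const (Or.inl hxne)
      exact (h2.comp x h1).congr_deriv (by ring)
    have hg : HasDerivAt (fun y : ℝ => y - h * γ * (y * (-y) ^ ν))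
        (1 - h * γ * (1 * (-x) ^ ν + x * ((-1) * (ν * (-x) ^ (ν - 1))))) x :=
      (hasDerivAt_id x).sub (((hasDerivAt_id x).mul hrp).const_mul (h * γ))
    have heq : (fun y : ℝ => y - h * γ * (y * (-y) ^ ν)) =ᶠ[nhds x] F := by
      filter_upwards [Iio_mem_nhds hneg] with y hy
      rw [hF y, abs_of_neg hy]; ring
    have := hg.congr_of_eventuallyEq heq.symm
    refine this.congr_deriv ?_
    symm
    have hxpow : x * (-x) ^ (ν - 1) = -(-x) ^ ν := by
      have : (-x) ^ ν = (-x) ^ (ν - 1) * (-x) := by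
        rw [← Real.rpow_add_one hxne]; ring_nf
      rw [this]; ring
    rw [abs_of_neg hneg]
    linear_combination (-h * γ * ν) * hxpow
  · -- x > 0, locally |y| = y
    have hg : HasDerivAt (fun y : ℝ => y - h * γ * (y * y ^ ν))
        (1 - h * γ * (1 * x ^ ν + x * (ν * x ^ (ν - 1)))) x :=
      (hasDerivAt_id x).sub
        (((hasDerivAt_id x).mul (Real.hasDerivAt_rpow_const (Or.inl (ne_of_gt hpos)))).const_mul (h * γ))
    have heq : (fun y : ℝ => y - h * γ * (y * y ^ ν)) =ᶠ[nhds x] F := by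
      filter_upwards [Ioi_mem_nhds hpos] with y hy
      rw [hF y, abs_of_pos hy]; ring
    have := hg.congr_of_eventuallyEq heq.symm
    refine this.congr_deriv ?_
    symm
    have hxpow : x * x ^ (ν - 1) = x ^ ν := by
      rw [mul_comm, ← Real.rpow_add_one (ne_of_gt hpos)]; ring_nf
    rw [abs_of_pos hpos]
    linear_combination (h * γ * ν) * hxpow

theorem two_cycle_unstable (γ ν h : ℝ) (hγ : 0 < γ) (hν : 0 < ν) (hh : 0 < h)
    (F : ℝ → ℝ) (hF : ∀ x, F x = x - h * γ * x * |x| ^ ν)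
    (p : ℝ) (hp : p = (2 / (h * γ)) ^ (1 / ν)) :
    HasDerivAt (F ∘ F) ((2 * ν + 1) ^ 2) p ∧ 1 < (2 * ν + 1) ^ 2 := by
  have hhγ : 0 < h * γ := mul_pos hh hγ
  have hppos : 0 < p := by rw [hp]; positivity
  have hpν : p ^ ν = 2 / (h * γ) := by
    rw [hp, ← Real.rpow_mul (by positivity : (0:ℝ) ≤ 2 / (h * γ)), one_div,
      inv_mul_cancel₀ (ne_of_gt hν), Real.rpow_one]
  have hFp : F p = -p := by
    rw [hF, abs_of_pos hppos, hpν]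
    field_simp
    ring
  have hd1 : HasDerivAt F (1 - h * γ * (ν + 1) * |p| ^ ν) p :=
    aux_hasDerivAt γ ν h hν F hF p (ne_of_gt hppos)
  have hd2 : HasDerivAt F (1 - h * γ * (ν + 1) * |(-p)| ^ ν) (-p) :=
    aux_hasDerivAt γ ν h hν F hF (-p) (by simpa using ne_of_gt hppos)
  have hval : 1 - h * γ * (ν + 1) * |p| ^ ν = -(2 * ν + 1) := by
    rw [abs_of_pos hppos, hpν]
    field_simp
    ring
  have hval2 : 1 - h * γ * (ν + 1) * |(-p)| ^ ν = -(2 * ν + 1) := by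
    rw [abs_neg, abs_of_pos hppos, hpν]
    field_simp
    ring
  rw [hval] at hd1
  rw [hval2] at hd2
  rw [← hFp] at hd2
  constructor
  · have := hd2.comp p hd1
    refine this.congr_deriv ?_
    ring
  · nlinarith
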